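/- Let n, k be integers with 2 ≤ k ≤ n, let 0 < p < 1, and fix S* ⊆ [n] with |S*| = k. Let G be the random graph on vertex set [n] in which every pair of vertices inside S* is an edge and every other pair of vertices is an edge independently with probability p. Then with probability at least 1 − k/n², every clique S of G with |S| ≥ k and S ≠ S* satisfies |S ∩ S*| ≤ 3·(log n)/(log(1/p)). -/

import Mathlib

open MeasureTheory

/-- Given a planted set `Sstar`, the edge set of the semi-random graph determined by a
sample `ω` of the edge indicators: a pair of distinct vertices is an edge iff both of
its endpoints lie in `Sstar` or its indicator is `true`. A set `S` is a clique of this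
graph iff any two distinct vertices of `S` are adjacent. -/
def IsPlantedClique {n : ℕ} (Sstar : Finset (Fin n)) (ω : Sym2 (Fin n) → Bool)
    (S : Finset (Fin n)) : Prop :=
  ∀ u ∈ S, ∀ v ∈ S, u ≠ v → ((u ∈ Sstar ∧ v ∈ Sstar) ∨ ω s(u, v) = true)

/-- The event that all pairs between `T` and `U` carry a `true` indicator. -/
def EvSet {n : ℕ} (T U : Finset (Fin n)) : Set (Sym2 (Fin n) → Bool) :=
  {ω | ∀ a ∈ T, ∀ b ∈ U, ω s(a, b) = true}

lemma ev_measure {n : ℕ} (p : ℝ) (hp1 : p ≤ 1) (F : Finset (Sym2 (Fin n))) :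
    (Measure.pi fun _ : Sym2 (Fin n) =>
        (PMF.bernoulli (Real.toNNReal p) (Real.toNNReal_le_one.mpr hp1)).toMeasure)
      {ω : Sym2 (Fin n) → Bool | ∀ e ∈ F, ω e = true} = (ENNReal.ofReal p) ^ F.card := by
  classical
  set B := (PMF.bernoulli (Real.toNNReal p) (Real.toNNReal_le_one.mpr hp1)).toMeasure with hB
  have h1 : {ω : Sym2 (Fin n) → Bool | ∀ e ∈ F, ω e = true}
      = Set.univ.pi (fun e => if e ∈ F then ({true} : Set Bool) else Set.univ) := by
    ext ω
    simp only [Set.mem_setOf_eq, Set.mem_pi, Set.mem_univ, forall_true_left]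
    constructor
    · intro h e
      by_cases he : e ∈ F <;> simp [he, h e]
    · intro h e he
      have := h e
      simp [he] at this
      exact this
  rw [h1, Measure.pi_pi]
  have h2 : ∀ e : Sym2 (Fin n),
      B (if e ∈ F then ({true} : Set Bool) else Set.univ)
      = if e ∈ F then ENNReal.ofReal p else 1 := by
    intro e
    by_cases he : e ∈ F
    · simp only [he, if_true, hB]
      rw [PMF.toMeasure_apply_singleton _ _ (measurableSet_singleton _)]
      simp [PMF.bernoulli_apply, ENNReal.ofReal]
    · rw [if_neg he, if_neg he]; exact (measure_univ (μ := B))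
  simp_rw [h2]
  rw [Finset.prod_ite_mem, Finset.univ_inter, Finset.prod_const]

open Finset in
lemma real_sum_bound {n k m₀ : ℕ} (hk2 : 2 ≤ k) (hkn : k ≤ n) (hLt : m₀ < k) (hm1 : 1 ≤ m₀)
    {p : ℝ} (hp0 : 0 ≤ p) (hp1 : p ≤ 1) (hpm0 : p ^ m₀ ≤ 1 / (n : ℝ) ^ 3) :
    ∑ j ∈ Icc 1 (k - m₀), ((k.choose (k - j) * (n - k).choose j : ℕ) : ℝ) * p ^ ((k - j) * j)
      ≤ (k : ℝ) / (n : ℝ) ^ 2 := by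
  have hn2 : 2 ≤ n := le_trans hk2 hkn
  have hN : (2 : ℝ) ≤ (n : ℝ) := by exact_mod_cast hn2
  have hN0 : (0 : ℝ) < (n : ℝ) := by linarith
  have hK : (2 : ℝ) ≤ (k : ℝ) := by exact_mod_cast hk2
  have hKN : (k : ℝ) ≤ (n : ℝ) := by exact_mod_cast hkn
  have hcast : ((n - k : ℕ) : ℝ) = (n : ℝ) - k := by
    push_cast [Nat.cast_sub hkn]; ring
  set J := k - m₀ with hJ
  have hJ1 : 1 ≤ J := by omega
  have hJk : J ≤ k := by omega
  set x : ℝ := (k : ℝ) * ((n : ℝ) - k) / (n : ℝ) ^ 3 with hx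
  have hx0 : 0 ≤ x := by
    apply div_nonneg _ (by positivity)
    have : (0:ℝ) ≤ (n:ℝ) - k := by linarith
    positivity
  have hx1 : x ≤ 1 := by
    rw [hx, div_le_one (by positivity)]
    have h1 : (k:ℝ)*((n:ℝ)-k) ≤ (n:ℝ)*(n:ℝ) := mul_le_mul hKN (by linarith) (by linarith) (by linarith)
    nlinarith [h1]
  -- bound on p powers
  have hpow : ∀ m : ℕ, m₀ ≤ m → p ^ m ≤ 1 / (n : ℝ) ^ 3 := fun m hm =>
    le_trans (pow_le_pow_of_le_one hp0 hp1 hm) hpm0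
  -- split off j = 1
  have hins : Icc 1 J = insert 1 (Icc 2 J) := by
    ext a; simp only [mem_Icc, mem_insert]; omega
  rw [hins, Finset.sum_insert (by simp [mem_Icc])]
  have hterm1 : ((k.choose (k - 1) * (n - k).choose 1 : ℕ) : ℝ) * p ^ ((k - 1) * 1) ≤ x := by
    have h1 : k.choose (k - 1) = k := by
      rw [Nat.choose_symm (by omega), Nat.choose_one_right]
    have h2 : (n - k).choose 1 = n - k := Nat.choose_one_right _
    rw [h1, h2, Nat.mul_one]
    have h3 : p ^ (k - 1) ≤ 1 / (n : ℝ) ^ 3 := hpow _ (by omega)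
    calc ((k * (n - k) : ℕ) : ℝ) * p ^ (k - 1)
        ≤ ((k * (n - k) : ℕ) : ℝ) * (1 / (n : ℝ) ^ 3) := by
          apply mul_le_mul_of_nonneg_left h3 (by positivity)
      _ = x := by rw [hx]; push_cast [hcast]; ring
  have hterm2 : ∀ j ∈ Icc 2 J,
      ((k.choose (k - j) * (n - k).choose j : ℕ) : ℝ) * p ^ ((k - j) * j) ≤ x ^ 2 / 4 := by
    intro j hj
    rw [mem_Icc] at hj
    obtain ⟨hj2, hjJ⟩ := hj
    have hjk : j ≤ k := le_trans hjJ hJk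
    have hcs : k.choose (k - j) = k.choose j := Nat.choose_symm hjk
    have hfact : (2 : ℝ) ≤ (j.factorial : ℝ) := by
      exact_mod_cast le_trans hj2 (Nat.self_le_factorial j)
    have hc1 : (k.choose j : ℝ) ≤ (k : ℝ) ^ j / 2 := by
      calc (k.choose j : ℝ) ≤ ((k : ℝ) ^ j) / (j.factorial : ℝ) := by
            exact_mod_cast Nat.choose_le_pow_div j k
        _ ≤ (k : ℝ) ^ j / 2 := by
            apply div_le_div_of_nonneg_left (by positivity) (by norm_num) hfact
    have hc2 : ((n - k).choose j : ℝ) ≤ ((n : ℝ) - k) ^ j / 2 := by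
      calc ((n - k).choose j : ℝ) ≤ (((n - k : ℕ) : ℝ) ^ j) / (j.factorial : ℝ) := by
            exact_mod_cast Nat.choose_le_pow_div j (n - k)
        _ ≤ ((n : ℝ) - k) ^ j / 2 := by
            rw [hcast]
            apply div_le_div_of_nonneg_left _ (by norm_num) hfact
            have : (0:ℝ) ≤ (n:ℝ) - k := by linarith
            positivity
    have hp3 : p ^ ((k - j) * j) ≤ (1 / (n : ℝ) ^ 3) ^ j := by
      rw [pow_mul]
      apply pow_le_pow_left₀ (by positivity)
      exact hpow _ (by omega)
    have hxj : x ^ j ≤ x ^ 2 := pow_le_pow_of_le_one hx0 hx1 hj2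
    have hnk0 : (0:ℝ) ≤ (n:ℝ) - k := by linarith
    calc ((k.choose (k - j) * (n - k).choose j : ℕ) : ℝ) * p ^ ((k - j) * j)
        = (k.choose j : ℝ) * ((n - k).choose j : ℝ) * p ^ ((k - j) * j) := by
          rw [hcs]; push_cast; ring
      _ ≤ ((k : ℝ) ^ j / 2) * (((n : ℝ) - k) ^ j / 2) * (1 / (n : ℝ) ^ 3) ^ j := by
          apply mul_le_mul (mul_le_mul hc1 hc2 (by positivity) (by positivity)) hp3
            (by positivity) (by positivity)
      _ = x ^ j / 4 := by rw [hx]; simp only [div_pow, mul_pow, one_pow]; ring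
      _ ≤ x ^ 2 / 4 := by linarith
  have hsum2 : ∑ j ∈ Icc 2 J, ((k.choose (k - j) * (n - k).choose j : ℕ) : ℝ) * p ^ ((k - j) * j)
      ≤ (k : ℝ) * (x ^ 2 / 4) := by
    calc ∑ j ∈ Icc 2 J, ((k.choose (k - j) * (n - k).choose j : ℕ) : ℝ) * p ^ ((k - j) * j)
        ≤ ∑ _j ∈ Icc 2 J, x ^ 2 / 4 := Finset.sum_le_sum hterm2
      _ = ((Icc 2 J).card : ℝ) * (x ^ 2 / 4) := by rw [Finset.sum_const, nsmul_eq_mul]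
      _ ≤ (k : ℝ) * (x ^ 2 / 4) := by
          apply mul_le_mul_of_nonneg_right _ (by positivity)
          have : (Icc 2 J).card ≤ k := by
            rw [Nat.card_Icc]; omega
          exact_mod_cast this
  have hfin : x + (k : ℝ) * (x ^ 2 / 4) ≤ (k : ℝ) / (n : ℝ) ^ 2 := by
    have hd : (0:ℝ) ≤ (n:ℝ) - k := by linarith
    have hsq : ((n:ℝ)-k)^2 ≤ (n:ℝ)^2 := by nlinarith
    have h1 : (k:ℝ)*((n:ℝ)-k)^2 ≤ (n:ℝ)*(n:ℝ)^2 := mul_le_mul hKN hsq (by positivity) (by linarith)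
    have key : 4*(k:ℝ)*((n:ℝ)-k)*(n:ℝ)^3 + (k:ℝ)^3*((n:ℝ)-k)^2 ≤ 4*(k:ℝ)*(n:ℝ)^4 := by
      nlinarith [mul_le_mul_of_nonneg_left h1 (sq_nonneg (k:ℝ)), sq_nonneg (k:ℝ), pow_pos hN0 3]
    have heq : x + (k:ℝ)*(x^2/4) = (4*(k:ℝ)*((n:ℝ)-k)*(n:ℝ)^3 + (k:ℝ)^3*((n:ℝ)-k)^2)/(4*(n:ℝ)^6) := by
      rw [hx]; field_simp
    have heq2 : (k:ℝ)/(n:ℝ)^2 = (4*(k:ℝ)*(n:ℝ)^4)/(4*(n:ℝ)^6) := by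
      field_simp
    rw [heq, heq2]
    gcongr
  linarith [hterm1, hsum2, hfin]

/-- Let `2 ≤ k ≤ n`, `0 < p < 1` and `Sstar ⊆ [n]` with `|Sstar| = k`. In the random
graph where all pairs inside `Sstar` are edges and every other pair is an edge
independently with probability `p`, with probability at least `1 − k/n²`, every clique
`S` with `|S| ≥ k` and `S ≠ Sstar` satisfies `|S ∩ Sstar| ≤ 3·(log n)/(log(1/p))`. -/
theorem stmt_17 {n k : ℕ} (hk2 : 2 ≤ k) (hkn : k ≤ n) (p : ℝ)
    (hp0 : 0 < p) (hp1 : p < 1) (Sstar : Finset (Fin n)) (hScard : Sstar.card = k) :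
    ENNReal.ofReal (1 - (k : ℝ) / (n : ℝ) ^ 2) ≤
      (Measure.pi fun _ : Sym2 (Fin n) =>
          (PMF.bernoulli (Real.toNNReal p) (Real.toNNReal_le_one.mpr hp1.le)).toMeasure)
        {ω | ∀ S : Finset (Fin n), IsPlantedClique Sstar ω S → k ≤ S.card → S ≠ Sstar →
          ((S ∩ Sstar).card : ℝ) ≤ 3 * Real.log n / Real.log (1 / p)} := by
  classical
  set μ := (Measure.pi fun _ : Sym2 (Fin n) =>
      (PMF.bernoulli (Real.toNNReal p) (Real.toNNReal_le_one.mpr hp1.le)).toMeasure) with hμ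
  haveI hprob : IsProbabilityMeasure μ := by rw [hμ]; infer_instance
  have hn2 : 2 ≤ n := le_trans hk2 hkn
  have hN0 : (0:ℝ) < (n:ℝ) := by
    have : (0:ℕ) < n := by omega
    exact_mod_cast this
  have hx0 : (0:ℝ) ≤ (k:ℝ)/(n:ℝ)^2 := by positivity
  set t0 : ℝ := 3 * Real.log n / Real.log (1 / p) with ht0
  have hL : 0 < Real.log (1 / p) := Real.log_pos (by rw [lt_div_iff₀ hp0]; linarith)
  have hlogn : 0 ≤ Real.log n := Real.log_nonneg (by exact_mod_cast Nat.one_le_of_lt hn2)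
  have ht0nn : 0 ≤ t0 := by rw [ht0]; positivity
  set A := {ω : Sym2 (Fin n) → Bool | ∀ S : Finset (Fin n),
      IsPlantedClique Sstar ω S → k ≤ S.card → S ≠ Sstar →
      ((S ∩ Sstar).card : ℝ) ≤ t0} with hA
  by_cases hcase : (k:ℝ) ≤ t0
  · have hAuniv : A = Set.univ := by
      apply Set.eq_univ_of_forall
      intro ω S _hclq _hcard _hne
      refine le_trans ?_ hcase
      have h1 : (S ∩ Sstar).card ≤ k := hScard ▸ Finset.card_le_card Finset.inter_subset_right
      exact_mod_cast h1
    rw [hAuniv, measure_univ]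
    exact ENNReal.ofReal_le_one.mpr (by linarith)
  push_neg at hcase
  -- p ^ t0 = 1 / n ^ 3 and consequences
  have hlogp : Real.log p < 0 := Real.log_neg hp0 hp1
  have hpt0 : p ^ t0 = 1 / (n:ℝ)^3 := by
    rw [Real.rpow_def_of_pos hp0, ht0]
    have h1 : Real.log (1/p) = - Real.log p := by rw [one_div, Real.log_inv]
    rw [h1]
    have hne : Real.log p ≠ 0 := ne_of_lt hlogp
    have h2 : Real.log p * (3 * Real.log n / - Real.log p) = -(3 * Real.log n) := by
      field_simp
    rw [h2, Real.exp_neg]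
    have h3 : Real.exp (3 * Real.log n) = (n:ℝ)^3 := by
      rw [show (3:ℝ) * Real.log n = ((3:ℕ):ℝ) * Real.log n by norm_num,
        Real.exp_nat_mul, Real.exp_log hN0]
    rw [h3, one_div]
  set m₀ : ℕ := ⌊t0⌋₊ + 1 with hm₀
  have hm0k : m₀ ≤ k := by
    have h1 : ⌊t0⌋₊ < k := (Nat.floor_lt ht0nn).mpr hcase
    omega
  have hpm0 : p ^ m₀ ≤ 1 / (n:ℝ)^3 := by
    calc p ^ m₀ = p ^ (m₀:ℝ) := (Real.rpow_natCast p m₀).symm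
      _ ≤ p ^ t0 := Real.rpow_le_rpow_of_exponent_ge hp0 hp1.le (by
          have h1 := Nat.lt_floor_add_one t0
          rw [hm₀]; push_cast; linarith)
      _ = 1/(n:ℝ)^3 := hpt0
  -- key event-measure bound
  have hkey : ∀ T U : Finset (Fin n), T ⊆ Sstar → (∀ b ∈ U, b ∉ Sstar) →
      μ (EvSet T U) ≤ ENNReal.ofReal (p ^ (T.card * U.card)) := by
    intro T U hT hU
    have hdisj : Disjoint T U := Finset.disjoint_left.mpr (fun {a} haT haU => hU a haU (hT haT))
    set F : Finset (Sym2 (Fin n)) := (T ×ˢ U).image (fun z => s(z.1, z.2)) with hF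
    have hEvF : EvSet T U = {ω : Sym2 (Fin n) → Bool | ∀ e ∈ F, ω e = true} := by
      ext ω
      simp only [EvSet, hF, Set.mem_setOf_eq]
      constructor
      · rintro h e he
        rw [Finset.mem_image] at he
        obtain ⟨⟨a, b⟩, hab, rfl⟩ := he
        rw [Finset.mem_product] at hab
        exact h a hab.1 b hab.2
      · intro h a ha b hb
        exact h _ (Finset.mem_image_of_mem _ (Finset.mem_product.mpr ⟨ha, hb⟩))
    have hcard : F.card = T.card * U.card := by
      rw [hF, Finset.card_image_of_injOn, Finset.card_product]
      rintro ⟨a, b⟩ hab ⟨c, d⟩ hcd h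
      simp only [Finset.coe_product, Set.mem_prod, Finset.mem_coe] at hab hcd
      rw [Sym2.eq_iff] at h
      rcases h with ⟨rfl, rfl⟩ | ⟨h1, h2⟩
      · rfl
      · exfalso
        apply Finset.disjoint_left.mp hdisj hab.1
        have had : a = d := h1
        rw [had]
        exact hcd.2
    have hEq2 : μ (EvSet T U) = ENNReal.ofReal (p ^ (T.card * U.card)) := by
      rw [hEvF, hμ, ev_measure p hp1.le F, hcard, ENNReal.ofReal_pow hp0.le]
    exact le_of_eq hEq2
  -- extraction of a bad clique
  have hbadS : ∀ ω : Sym2 (Fin n) → Bool, ω ∈ Aᶜ →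
      ∃ S, IsPlantedClique Sstar ω S ∧ k ≤ S.card ∧ S ≠ Sstar ∧
        m₀ ≤ (S ∩ Sstar).card ∧ (S ∩ Sstar).card ≤ k := by
    intro ω hω
    simp only [hA, Set.mem_compl_iff, Set.mem_setOf_eq] at hω
    push_neg at hω
    obtain ⟨S, hclq, hcard, hne, hgt⟩ := hω
    refine ⟨S, hclq, hcard, hne, ?_, ?_⟩
    · have h1 : ⌊t0⌋₊ < (S ∩ Sstar).card := (Nat.floor_lt ht0nn).mpr hgt
      omega
    · rw [← hScard]; exact Finset.card_le_card Finset.inter_subset_right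
  -- main bound on the bad event
  have hbound : μ Aᶜ ≤ ENNReal.ofReal ((k:ℝ)/(n:ℝ)^2) := by
    rcases eq_or_lt_of_le hm0k with hEq | hLt
    · -- m₀ = k : only S ⊇ Sstar possible
      have hsub : Aᶜ ⊆ ⋃ v ∈ Sstarᶜ, EvSet Sstar {v} := by
        intro ω hω
        obtain ⟨S, hclq, hcard, hne, hm0m, hmk⟩ := hbadS ω hω
        have hmk' : (S ∩ Sstar).card = k := le_antisymm hmk (hEq ▸ hm0m)
        have hSS : Sstar ⊆ S := by
          have h1 : S ∩ Sstar = Sstar := Finset.eq_of_subset_of_card_le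
            Finset.inter_subset_right (by rw [hmk', hScard])
          intro a ha
          have h2 : a ∈ S ∩ Sstar := h1.symm ▸ ha
          exact (Finset.mem_inter.mp h2).1
        obtain ⟨v, hvS, hvn⟩ := Finset.exists_of_ssubset
          (lt_of_le_of_ne hSS (fun h => hne h.symm))
        refine Set.mem_biUnion (Finset.mem_compl.mpr hvn) ?_
        simp only [EvSet, Set.mem_setOf_eq]
        intro a ha b hb
        rw [Finset.mem_singleton] at hb
        rw [hb]
        rcases hclq a (hSS ha) v hvS (fun h => hvn (h ▸ ha)) with ⟨_, h2⟩ | hωe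
        · exact absurd h2 hvn
        · exact hωe
      calc μ Aᶜ ≤ μ (⋃ v ∈ Sstarᶜ, EvSet Sstar {v}) := measure_mono hsub
        _ ≤ ∑ v ∈ Sstarᶜ, μ (EvSet Sstar {v}) := measure_biUnion_finset_le _ _
        _ ≤ ∑ _v ∈ Sstarᶜ, ENNReal.ofReal (p ^ (k * 1)) := Finset.sum_le_sum (fun v hv => by
            have h1 := hkey Sstar {v} subset_rfl (fun b hb => by
              rw [Finset.mem_singleton] at hb; rw [hb]; exact Finset.mem_compl.mp hv)
            rwa [hScard, Finset.card_singleton] at h1)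
        _ = (Sstarᶜ.card : ℕ) • ENNReal.ofReal (p ^ (k * 1)) := Finset.sum_const _
        _ ≤ ENNReal.ofReal ((k:ℝ)/(n:ℝ)^2) := by
            rw [nsmul_eq_mul, ← ENNReal.ofReal_natCast, ← ENNReal.ofReal_mul (Nat.cast_nonneg _)]
            apply ENNReal.ofReal_le_ofReal
            have h1 : p ^ (k * 1) ≤ 1/(n:ℝ)^3 := by rw [Nat.mul_one, ← hEq]; exact hpm0
            have h2 : ((Sstarᶜ.card : ℕ):ℝ) ≤ (n:ℝ) := by
              have := (Sstarᶜ : Finset (Fin n)).card_le_univ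
              calc ((Sstarᶜ.card : ℕ):ℝ) ≤ (Fintype.card (Fin n) : ℝ) := by exact_mod_cast this
                _ = (n:ℝ) := by rw [Fintype.card_fin]
            calc ((Sstarᶜ.card : ℕ):ℝ) * p ^ (k * 1) ≤ (n:ℝ) * (1/(n:ℝ)^3) :=
                  mul_le_mul h2 h1 (by positivity) hN0.le
              _ = 1/(n:ℝ)^2 := by field_simp
              _ ≤ (k:ℝ)/(n:ℝ)^2 := by
                  gcongr
                  have : (1:ℕ) ≤ k := by omega
                  exact_mod_cast this
    · -- m₀ < k
      set J := k - m₀ with hJdef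
      have hsub : Aᶜ ⊆ ⋃ j ∈ Finset.Icc 1 J, ⋃ T ∈ Finset.powersetCard (k - j) Sstar,
          ⋃ U ∈ Finset.powersetCard j Sstarᶜ, EvSet T U := by
        intro ω hω
        obtain ⟨S, hclq, hcard, hne, hm0m, hmk⟩ := hbadS ω hω
        rcases eq_or_lt_of_le hmk with hmEq | hmLt
        · -- S ∩ Sstar = Sstar : take j = 1
          have hSS : Sstar ⊆ S := by
            have h1 : S ∩ Sstar = Sstar := Finset.eq_of_subset_of_card_le
              Finset.inter_subset_right (by rw [hmEq, hScard])
            intro a ha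
            have h2 : a ∈ S ∩ Sstar := h1.symm ▸ ha
            exact (Finset.mem_inter.mp h2).1
          obtain ⟨v, hvS, hvn⟩ := Finset.exists_of_ssubset
            (lt_of_le_of_ne hSS (fun h => hne h.symm))
          obtain ⟨T, hTsub, hTcard⟩ := Finset.exists_subset_card_eq
            (show k - 1 ≤ Sstar.card by rw [hScard]; omega)
          refine Set.mem_biUnion (show (1:ℕ) ∈ Finset.Icc 1 J by
            rw [Finset.mem_Icc]; omega) ?_
          refine Set.mem_biUnion (Finset.mem_powersetCard.mpr ⟨hTsub, hTcard⟩) ?_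
          refine Set.mem_biUnion (Finset.mem_powersetCard.mpr
            ⟨?_, Finset.card_singleton v⟩) ?_
          · intro b hb
            rw [Finset.mem_singleton] at hb
            rw [hb]
            exact Finset.mem_compl.mpr hvn
          · simp only [EvSet, Set.mem_setOf_eq]
            intro a ha b hb
            rw [Finset.mem_singleton] at hb
            rw [hb]
            have haS : a ∈ Sstar := hTsub ha
            rcases hclq a (hSS haS) v hvS (fun h => hvn (h ▸ haS)) with ⟨_, h2⟩ | hωe
            · exact absurd h2 hvn
            · exact hωe
        · -- m < k
          have hUex : k - (S ∩ Sstar).card ≤ (S \ Sstar).card := by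
            have h1 := Finset.card_sdiff_add_card_inter S Sstar
            omega
          obtain ⟨U, hUsub, hUcard⟩ := Finset.exists_subset_card_eq hUex
          refine Set.mem_biUnion (show k - (S ∩ Sstar).card ∈ Finset.Icc 1 J by
            rw [Finset.mem_Icc]; omega) ?_
          refine Set.mem_biUnion (Finset.mem_powersetCard.mpr
            ⟨(Finset.inter_subset_right : S ∩ Sstar ⊆ Sstar), by omega⟩) ?_
          refine Set.mem_biUnion (Finset.mem_powersetCard.mpr ⟨?_, hUcard⟩) ?_
          · intro b hb
            exact Finset.mem_compl.mpr (Finset.mem_sdiff.mp (hUsub hb)).2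
          · simp only [EvSet, Set.mem_setOf_eq]
            intro a ha b hb
            obtain ⟨haS, haSt⟩ := Finset.mem_inter.mp ha
            obtain ⟨hbS, hbn⟩ := Finset.mem_sdiff.mp (hUsub hb)
            rcases hclq a haS b hbS (fun h => hbn (h ▸ haSt)) with ⟨_, h2⟩ | hωe
            · exact absurd h2 hbn
            · exact hωe
      have hμj : ∀ j ∈ Finset.Icc 1 J,
          μ (⋃ T ∈ Finset.powersetCard (k - j) Sstar,
              ⋃ U ∈ Finset.powersetCard j Sstarᶜ, EvSet T U)
          ≤ ENNReal.ofReal (((k.choose (k - j) * (n - k).choose j : ℕ):ℝ)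
              * p ^ ((k - j) * j)) := by
        intro j _hj
        calc μ (⋃ T ∈ Finset.powersetCard (k - j) Sstar,
                ⋃ U ∈ Finset.powersetCard j Sstarᶜ, EvSet T U)
            ≤ ∑ T ∈ Finset.powersetCard (k - j) Sstar,
                μ (⋃ U ∈ Finset.powersetCard j Sstarᶜ, EvSet T U) :=
              measure_biUnion_finset_le _ _
          _ ≤ ∑ T ∈ Finset.powersetCard (k - j) Sstar,
                ∑ U ∈ Finset.powersetCard j Sstarᶜ, μ (EvSet T U) :=
              Finset.sum_le_sum (fun T _hT => measure_biUnion_finset_le _ _)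
          _ ≤ ∑ _T ∈ Finset.powersetCard (k - j) Sstar,
                ∑ _U ∈ Finset.powersetCard j Sstarᶜ,
                  ENNReal.ofReal (p ^ ((k - j) * j)) :=
              Finset.sum_le_sum (fun T hT => Finset.sum_le_sum (fun U hU => by
                obtain ⟨hTs, hTc⟩ := Finset.mem_powersetCard.mp hT
                obtain ⟨hUs, hUc⟩ := Finset.mem_powersetCard.mp hU
                have h1 := hkey T U hTs (fun b hb => Finset.mem_compl.mp (hUs hb))
                rwa [hTc, hUc] at h1))
          _ = ((Finset.powersetCard (k - j) Sstar).card
                * (Finset.powersetCard j Sstarᶜ).card : ℕ)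
                • ENNReal.ofReal (p ^ ((k - j) * j)) := by
              rw [Finset.sum_const, Finset.sum_const, smul_smul]
          _ = ENNReal.ofReal (((k.choose (k - j) * (n - k).choose j : ℕ):ℝ)
                * p ^ ((k - j) * j)) := by
              rw [Finset.card_powersetCard, Finset.card_powersetCard, hScard,
                Finset.card_compl, Fintype.card_fin, hScard, nsmul_eq_mul,
                ← ENNReal.ofReal_natCast, ← ENNReal.ofReal_mul (Nat.cast_nonneg _)]
      calc μ Aᶜ ≤ μ (⋃ j ∈ Finset.Icc 1 J, ⋃ T ∈ Finset.powersetCard (k - j) Sstar,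
              ⋃ U ∈ Finset.powersetCard j Sstarᶜ, EvSet T U) := measure_mono hsub
        _ ≤ ∑ j ∈ Finset.Icc 1 J, μ (⋃ T ∈ Finset.powersetCard (k - j) Sstar,
              ⋃ U ∈ Finset.powersetCard j Sstarᶜ, EvSet T U) :=
            measure_biUnion_finset_le _ _
        _ ≤ ∑ j ∈ Finset.Icc 1 J, ENNReal.ofReal
              (((k.choose (k - j) * (n - k).choose j : ℕ):ℝ) * p ^ ((k - j) * j)) :=
            Finset.sum_le_sum hμj
        _ = ENNReal.ofReal (∑ j ∈ Finset.Icc 1 J,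
              ((k.choose (k - j) * (n - k).choose j : ℕ):ℝ) * p ^ ((k - j) * j)) :=
            (ENNReal.ofReal_sum_of_nonneg (fun j _hj => by positivity)).symm
        _ ≤ ENNReal.ofReal ((k:ℝ)/(n:ℝ)^2) := ENNReal.ofReal_le_ofReal
            (real_sum_bound hk2 hkn hLt (by omega) hp0.le hp1.le hpm0)
  -- conclude
  have hmeas : MeasurableSet Aᶜ := (Set.to_countable _).measurableSet
  calc ENNReal.ofReal (1 - (k:ℝ)/(n:ℝ)^2)
      = ENNReal.ofReal 1 - ENNReal.ofReal ((k:ℝ)/(n:ℝ)^2) := ENNReal.ofReal_sub 1 hx0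
    _ ≤ 1 - μ Aᶜ := by
        rw [ENNReal.ofReal_one]
        exact tsub_le_tsub_left hbound 1
    _ = μ A := by rw [← prob_compl_eq_one_sub hmeas, compl_compl]
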